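/- For h > 0 and odd j ≥ 2 (i.e., j ≥ 3 odd), the recurrence (i+j+1) I_{i,j}(h) = j h I_{i,j-2}(h) - 2 r^{i+2j+1} holds, where r = sqrt((sqrt(1+4h)-1)/2) and I_{i,j}(h) = 2 ∫_r^{√h} x^i (h-x^2)^{j/2} dx. -/

import Mathlib

open Real intervalIntegral

theorem stmt_4 (h : ℝ) (hh : 0 < h) (i j : ℕ) (hj : Odd j) (hj3 : 3 ≤ j)
    (r : ℝ) (hr : r = Real.sqrt ((Real.sqrt (1 + 4 * h) - 1) / 2))
    (I : ℕ → ℕ → ℝ)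
    (hI : ∀ i' j', I i' j' =
      2 * ∫ x in r..(Real.sqrt h), x ^ i' * (h - x ^ 2) ^ ((j' : ℝ) / 2)) :
    ((i : ℝ) + j + 1) * I i j =
      (j : ℝ) * h * I i (j - 2) - 2 * r ^ (i + 2 * j + 1) := by
  have hu2 : (Real.sqrt (1 + 4 * h)) ^ 2 = 1 + 4 * h := Real.sq_sqrt (by linarith)
  have hu1 : (1 : ℝ) ≤ Real.sqrt (1 + 4 * h) := by
    nlinarith [Real.sqrt_nonneg (1 + 4 * h)]
  have hs0 : 0 ≤ (Real.sqrt (1 + 4 * h) - 1) / 2 := by linarith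
  have hr0 : 0 ≤ r := hr ▸ Real.sqrt_nonneg _
  have hr2 : r ^ 2 = (Real.sqrt (1 + 4 * h) - 1) / 2 := by
    rw [hr, Real.sq_sqrt hs0]
  have hkey : r ^ 2 + r ^ 4 = h := by nlinarith [hr2, hu2]
  have hsh2 : (Real.sqrt h) ^ 2 = h := Real.sq_sqrt hh.le
  have hrh : r ≤ Real.sqrt h := by
    nlinarith [Real.sqrt_nonneg h, sq_nonneg (r - Real.sqrt h), sq_nonneg r]
  -- exponents
  set p : ℝ := (j : ℝ) / 2 with hp
  set q : ℝ := ((j - 2 : ℕ) : ℝ) / 2 with hq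
  have hj2 : ((j - 2 : ℕ) : ℝ) = (j : ℝ) - 2 := by
    have : (2 : ℕ) ≤ j := by omega
    push_cast [Nat.cast_sub this]; ring
  have hqp : q = p - 1 := by rw [hq, hj2, hp]; ring
  have hp32 : (3 : ℝ) / 2 ≤ p := by
    rw [hp]
    have : (3 : ℝ) ≤ (j : ℝ) := by exact_mod_cast hj3
    linarith
  have hp1 : (1 : ℝ) ≤ p := by linarith
  set F : ℝ → ℝ := fun x => x ^ (i + 1) * (h - x ^ 2) ^ p with hF
  set f : ℝ → ℝ := fun x =>
    ((i : ℝ) + j + 1) * (x ^ i * (h - x ^ 2) ^ p) -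
      (j : ℝ) * h * (x ^ i * (h - x ^ 2) ^ q) with hf
  have hderiv : ∀ x ∈ Set.uIcc r (Real.sqrt h), HasDerivAt F (f x) x := by
    intro x hx
    rw [Set.uIcc_of_le hrh] at hx
    have hx2 : x ^ 2 ≤ h := by
      have h1 : r ≤ x := hx.1
      have h2 : x ≤ Real.sqrt h := hx.2
      nlinarith [Real.sqrt_nonneg h]
    have hg : HasDerivAt (fun x : ℝ => h - x ^ 2) (-(2 * x)) x := by
      simpa using (hasDerivAt_pow 2 x).const_sub h
    have hG : HasDerivAt (fun x : ℝ => (h - x ^ 2) ^ p)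
        (-(2 * x) * p * (h - x ^ 2) ^ (p - 1)) x :=
      hg.rpow_const (Or.inr hp1)
    have hX : HasDerivAt (fun x : ℝ => x ^ (i + 1)) (((i : ℝ) + 1) * x ^ i) x := by
      simpa using hasDerivAt_pow (i + 1) x
    have hFd : HasDerivAt (fun y : ℝ => y ^ (i + 1) * (h - y ^ 2) ^ p)
        (((i : ℝ) + 1) * x ^ i * (h - x ^ 2) ^ p + x ^ (i + 1) * (-(2 * x) * p * (h - x ^ 2) ^ (p - 1))) x :=
      hX.mul hG
    convert hFd using 1
    rcases eq_or_lt_of_le (sub_nonneg.2 hx2) with ht | ht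
    · have z1 : (0 : ℝ) ^ p = 0 := Real.zero_rpow (by positivity)
      have z2 : (0 : ℝ) ^ q = 0 := Real.zero_rpow (by rw [hqp]; intro hc; linarith)
      have z3 : (0 : ℝ) ^ (p - 1) = 0 := Real.zero_rpow (by intro hc; linarith)
      rw [hf]
      simp only [← ht, z1, z2, z3]
      ring
    · have htne : h - x ^ 2 ≠ 0 := ne_of_gt ht
      have e1 : (h - x ^ 2) ^ p = (h - x ^ 2) ^ (p - 1) * (h - x ^ 2) := by
        rw [show p = p - 1 + 1 by ring, Real.rpow_add_one htne]
        ring_nf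
      simp only [hf]
      rw [hqp, e1]
      generalize (h - x ^ 2) ^ (p - 1) = A
      rw [hp]
      ring
  have hcont : Continuous f := by
    have c1 : Continuous fun x : ℝ => (h - x ^ 2) ^ p :=
      (continuous_const.sub (continuous_pow 2)).rpow_const fun x => Or.inr (by linarith)
    have c2 : Continuous fun x : ℝ => (h - x ^ 2) ^ q :=
      (continuous_const.sub (continuous_pow 2)).rpow_const fun x => Or.inr (by rw [hqp]; linarith)
    rw [hf]
    exact (continuous_const.mul ((continuous_pow i).mul c1)).sub
      (continuous_const.mul ((continuous_pow i).mul c2))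
  have hint : IntervalIntegrable f MeasureTheory.volume r (Real.sqrt h) :=
    hcont.intervalIntegrable _ _
  have key := intervalIntegral.integral_eq_sub_of_hasDerivAt hderiv hint
  -- compute boundary terms
  have hFs : F (Real.sqrt h) = 0 := by
    rw [hF]
    simp only [hsh2, sub_self]
    rw [Real.zero_rpow (by positivity)]
    ring
  have hFr : F r = r ^ (i + 2 * j + 1) := by
    have h4 : h - r ^ 2 = r ^ 4 := by linarith
    have e2 : (r ^ 4 : ℝ) ^ p = r ^ (2 * j) := by
      rw [← Real.rpow_natCast r 4, ← Real.rpow_mul hr0, hp]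
      rw [show (4 : ℕ) * ((j : ℝ) / 2) = ((2 * j : ℕ) : ℝ) by push_cast; ring]
      exact Real.rpow_natCast r (2 * j)
    simp only [hF]
    rw [h4, e2, ← pow_add]
    ring
  rw [hFs, hFr] at key
  -- split the integral
  have i1 : IntervalIntegrable (fun x : ℝ => x ^ i * (h - x ^ 2) ^ p)
      MeasureTheory.volume r (Real.sqrt h) := by
    apply Continuous.intervalIntegrable
    exact (continuous_pow i).mul
      ((continuous_const.sub (continuous_pow 2)).rpow_const fun x => Or.inr (by linarith))
  have i2 : IntervalIntegrable (fun x : ℝ => x ^ i * (h - x ^ 2) ^ q)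
      MeasureTheory.volume r (Real.sqrt h) := by
    apply Continuous.intervalIntegrable
    exact (continuous_pow i).mul
      ((continuous_const.sub (continuous_pow 2)).rpow_const fun x => Or.inr (by rw [hqp]; linarith))
  have hsplit : (∫ x in r..(Real.sqrt h), f x) =
      ((i : ℝ) + j + 1) * (∫ x in r..(Real.sqrt h), x ^ i * (h - x ^ 2) ^ p) -
        (j : ℝ) * h * (∫ x in r..(Real.sqrt h), x ^ i * (h - x ^ 2) ^ q) := by
    rw [hf]
    rw [intervalIntegral.integral_sub (i1.const_mul _) (i2.const_mul _),
      intervalIntegral.integral_const_mul, intervalIntegral.integral_const_mul]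
  rw [hsplit] at key
  have hIj := hI i j
  have hIj2 := hI i (j - 2)
  rw [hp, hq] at key
  linear_combination ((i : ℝ) + (j : ℝ) + 1) * hIj - (j : ℝ) * h * hIj2 + 2 * key
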